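/- Let N ≥ 1 and let Π ⊆ ℤ_{≥0}^N be a finite, nonempty, monotone set. Then Π has at least two distinct maximal elements (with respect to the componentwise order) if and only if conv(Π) has two distinct extreme points each of which is a maximal element of conv(Π). -/

import Mathlib

/-- Base-B digit uniqueness. -/
lemma digits_inj : ∀ (n B : ℕ) (a b : Fin n → ℕ), (∀ i, a i < B) → (∀ i, b i < B) →
    (∑ i, a i * B ^ (i : ℕ)) = (∑ i, b i * B ^ (i : ℕ)) → a = b := by
  intro n
  induction n with
  | zero => intro B a b _ _ _; funext i; exact i.elim0
  | succ n ih =>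
    intro B a b ha hb h
    have hB : 0 < B := lt_of_le_of_lt (Nat.zero_le _) (ha 0)
    rw [Fin.sum_univ_succ, Fin.sum_univ_succ] at h
    have hpow : ∀ (c : Fin (n+1) → ℕ),
        (∑ i : Fin n, c i.succ * B ^ ((i.succ : Fin (n+1)) : ℕ))
          = (∑ i : Fin n, c i.succ * B ^ (i : ℕ)) * B := by
      intro c
      rw [Finset.sum_mul]
      refine Finset.sum_congr rfl fun i _ => ?_
      have : ((i.succ : Fin (n+1)) : ℕ) = (i : ℕ) + 1 := rfl
      rw [this, pow_succ, mul_assoc]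
    rw [hpow a, hpow b] at h
    simp only [Fin.val_zero, pow_zero, mul_one] at h
    set S := ∑ i : Fin n, a i.succ * B ^ (i : ℕ)
    set T := ∑ i : Fin n, b i.succ * B ^ (i : ℕ)
    have h0 : a 0 = b 0 := by
      have h1 : (a 0 + S * B) % B = a 0 := by
        rw [Nat.add_mul_mod_self_right, Nat.mod_eq_of_lt (ha 0)]
      have h2 : (b 0 + T * B) % B = b 0 := by
        rw [Nat.add_mul_mod_self_right, Nat.mod_eq_of_lt (hb 0)]
      rw [← h1, ← h2, h]
    have hST : S = T := by
      have : S * B = T * B := by omega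
      exact Nat.eq_of_mul_eq_mul_right hB this
    have := ih B (fun i => a i.succ) (fun i => b i.succ) (fun i => ha _) (fun i => hb _) hST
    funext i
    refine Fin.cases h0 (fun j => ?_) i
    exact congrFun this j

lemma digits_lt : ∀ (n B : ℕ) (a : Fin n → ℕ), (∀ i, a i < B) →
    (∑ i, a i * B ^ (i : ℕ)) < B ^ n := by
  intro n
  induction n with
  | zero => intro B a _; simp
  | succ n ih =>
    intro B a ha
    rw [Fin.sum_univ_succ]
    have hS : (∑ i : Fin n, a i.succ * B ^ ((i.succ : Fin (n+1)) : ℕ))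
        = (∑ i : Fin n, a i.succ * B ^ (i : ℕ)) * B := by
      rw [Finset.sum_mul]
      refine Finset.sum_congr rfl fun i _ => ?_
      have : ((i.succ : Fin (n+1)) : ℕ) = (i : ℕ) + 1 := rfl
      rw [this, pow_succ, mul_assoc]
    rw [hS]
    have h1 : (∑ i : Fin n, a i.succ * B ^ (i : ℕ)) < B ^ n := ih B _ (fun i => ha _)
    have h2 : a 0 < B := ha 0
    have h3 : ((∑ i : Fin n, a i.succ * B ^ (i : ℕ)) + 1) * B ≤ B ^ n * B :=
      Nat.mul_le_mul_right B h1
    simp only [Fin.val_zero, pow_zero, mul_one]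
    calc a 0 + (∑ i : Fin n, a i.succ * B ^ (i : ℕ)) * B
        < B + (∑ i : Fin n, a i.succ * B ^ (i : ℕ)) * B := by omega
      _ = ((∑ i : Fin n, a i.succ * B ^ (i : ℕ)) + 1) * B := by ring
      _ ≤ B ^ n * B := h3
      _ = B ^ (n + 1) := (pow_succ B n).symm

/-- A strict unique maximizer of a strictly positive linear functional over S is an
extreme point of the hull and a maximal point of the hull. -/
lemma unique_max_extreme (N : ℕ) (S : Set (Fin N → ℝ)) (w : Fin N → ℝ) (hw : ∀ i, 0 < w i)
    (z : Fin N → ℝ) (hz : z ∈ S)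
    (hmax : ∀ y ∈ S, y ≠ z → (∑ i, w i * y i) < (∑ i, w i * z i)) :
    z ∈ Set.extremePoints ℝ (convexHull ℝ S) ∧ ∀ y ∈ convexHull ℝ S, z ≤ y → z = y := by
  set f : (Fin N → ℝ) → ℝ := fun x => ∑ i, w i * x i with hf
  set c : ℝ := f z with hc
  have flin : ∀ (a b : ℝ) (x y : Fin N → ℝ), f (a • x + b • y) = a * f x + b * f y := by
    intro a b x y
    simp only [hf, Pi.add_apply, Pi.smul_apply, smul_eq_mul, mul_add, Finset.sum_add_distrib,
      Finset.mul_sum]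
    congr 1 <;> refine Finset.sum_congr rfl fun i _ => by ring
  have hsub : convexHull ℝ S ⊆ {x | f x < c ∨ x = z} := by
    apply convexHull_min
    · intro y hy
      by_cases hyz : y = z
      · exact Or.inr hyz
      · exact Or.inl (hmax y hy hyz)
    · rintro x hx y hy a b ha hb hab
      rcases eq_or_lt_of_le ha with rfl | ha'
      · simp only [zero_add] at hab; subst hab
        simpa using hy
      rcases eq_or_lt_of_le hb with rfl | hb'
      · simp only [add_zero] at hab; subst hab
        simpa using hx
      by_cases hxz : x = z
      · by_cases hyz : y = z
        · right; rw [hxz, hyz, ← add_smul, hab, one_smul]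
        · have hylt : f y < c := Or.resolve_right hy hyz
          have hfx : f x = c := by rw [hxz, hc]
          left
          rw [flin]
          have hac : a * c + b * c = c := by rw [← add_mul, hab, one_mul]
          have h2 : b * f y < b * c := (mul_lt_mul_iff_right₀ hb').mpr hylt
          linarith [mul_le_mul_of_nonneg_left (le_of_eq hfx) ha]
      · have hxlt : f x < c := Or.resolve_right hx hxz
        have hyle : f y ≤ c := by
          rcases hy with h | h
          · exact h.le
          · rw [h]
        left
        rw [flin]
        have hac : a * c + b * c = c := by rw [← add_mul, hab, one_mul]
        have h1 : a * f x < a * c := (mul_lt_mul_iff_right₀ ha').mpr hxlt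
        linarith [mul_le_mul_of_nonneg_left hyle hb]
  have hmem : z ∈ convexHull ℝ S := subset_convexHull ℝ S hz
  have hle : ∀ y ∈ convexHull ℝ S, f y ≤ c ∧ (f y = c → y = z) := by
    intro y hy
    rcases hsub hy with h | rfl
    · exact ⟨le_of_lt h, fun he => absurd he (ne_of_lt h)⟩
    · exact ⟨le_refl c, fun _ => rfl⟩
  constructor
  · rw [mem_extremePoints]
    refine ⟨hmem, fun x hx y hy hseg => ?_⟩
    obtain ⟨a, b, ha, hb, hab, habz⟩ := hseg
    have hfz : a * f x + b * f y = c := by rw [← flin a b x y, habz]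
    have hxle := (hle x hx).1
    have hyle := (hle y hy).1
    have h1 : a * f x ≤ a * c := mul_le_mul_of_nonneg_left hxle ha.le
    have h2 : b * f y ≤ b * c := mul_le_mul_of_nonneg_left hyle hb.le
    have hac : a * c + b * c = c := by rw [← add_mul, hab, one_mul]
    have hfx : f x = c := by
      by_contra hne
      have : a * f x < a * c := (mul_lt_mul_iff_right₀ ha).mpr (lt_of_le_of_ne hxle hne)
      linarith
    have hfy : f y = c := by
      by_contra hne
      have : b * f y < b * c := (mul_lt_mul_iff_right₀ hb).mpr (lt_of_le_of_ne hyle hne)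
      linarith
    exact ⟨(hle x hx).2 hfx, (hle y hy).2 hfy⟩
  · intro y hy hzy
    have h1 : c ≤ f y := by
      apply Finset.sum_le_sum
      intro i _
      exact mul_le_mul_of_nonneg_left (hzy i) (le_of_lt (hw i))
    rcases hsub hy with h | rfl
    · exact absurd h1 (not_le.mpr h)
    · rfl

lemma nat_arith (A A' X Y P : ℕ) (hC : A < P) (heq : A + X = A' + Y) (h2 : X + P ≤ Y) : False := by
  omega

lemma nat_arith2 (A A' X Y P : ℕ) (hC' : A' < P) (h1 : A + X ≤ A' + Y) (h2 : Y + P ≤ X) : False := by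
  omega

/-- For a finite, nonempty, monotone set `Π ⊆ ℤ_{≥0}^N`, `Π` has at
least two distinct maximal elements (componentwise order) iff `conv(Π)` has two
distinct extreme points each of which is maximal in `conv(Π)`. -/
theorem two_maximal_iff_two_maximal_extreme
    (N : ℕ) (hN : 1 ≤ N) (Sched : Set (Fin N → ℝ))
    (hfin : Sched.Finite) (hne : Sched.Nonempty)
    (hint : ∀ d ∈ Sched, ∀ i, ∃ m : ℕ, d i = (m : ℝ))
    (hmono : ∀ d ∈ Sched, ∀ d' : Fin N → ℝ,
      (∀ i, ∃ m : ℕ, d' i = (m : ℝ)) → d' ≤ d → d' ∈ Sched) :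
    (∃ d₁ ∈ Sched, ∃ d₂ ∈ Sched, d₁ ≠ d₂ ∧
        (∀ y ∈ Sched, d₁ ≤ y → d₁ = y) ∧ (∀ y ∈ Sched, d₂ ≤ y → d₂ = y))
    ↔
    (∃ d₁ ∈ Set.extremePoints ℝ (convexHull ℝ Sched),
      ∃ d₂ ∈ Set.extremePoints ℝ (convexHull ℝ Sched), d₁ ≠ d₂ ∧
        (∀ y ∈ convexHull ℝ Sched, d₁ ≤ y → d₁ = y) ∧
        (∀ y ∈ convexHull ℝ Sched, d₂ ≤ y → d₂ = y)) := by
  classical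
  constructor
  · rintro ⟨d₁, hd₁, d₂, hd₂, hne12, hmax1, hmax2⟩
    -- natural-number representative of each coordinate
    set toN : ℝ → ℕ := fun x => if h : ∃ m : ℕ, x = (m : ℝ) then h.choose else 0 with htoN
    have hcast : ∀ d ∈ Sched, ∀ i, ((toN (d i) : ℝ)) = d i := by
      intro d hd i
      have h := hint d hd i
      simp only [htoN, dif_pos h]
      exact h.choose_spec.symm
    set s := hfin.toFinset with hs
    have hmem : ∀ d, d ∈ s ↔ d ∈ Sched := fun d => hfin.mem_toFinset
    set B : ℕ := (s.sup fun d => Finset.univ.sup fun i => toN (d i)) + 1 with hB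
    have hbound : ∀ d ∈ Sched, ∀ i, toN (d i) < B := by
      intro d hd i
      have h1 : toN (d i) ≤ Finset.univ.sup fun i => toN (d i) :=
        Finset.le_sup (f := fun i => toN (d i)) (Finset.mem_univ i)
      have h2 : (Finset.univ.sup fun i => toN (d i))
          ≤ s.sup fun d => Finset.univ.sup fun i => toN (d i) :=
        Finset.le_sup (f := fun d => Finset.univ.sup fun i => toN (d i)) ((hmem d).mpr hd)
      rw [hB]
      exact Nat.lt_succ_of_le (le_trans h1 h2)
    set g : Fin N → (Fin N → ℝ) → ℕ :=
      fun j d => (∑ k, toN (d k) * B ^ (k : ℕ)) + B ^ N * toN (d j) with hg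
    have hcore_lt : ∀ d ∈ Sched, (∑ k, toN (d k) * B ^ (k : ℕ)) < B ^ N :=
      fun d hd => digits_lt N B _ (hbound d hd)
    -- injectivity of g j on Sched
    have hginj : ∀ j, ∀ d ∈ Sched, ∀ d' ∈ Sched, g j d = g j d' → d = d' := by
      intro j d hd d' hd' heq
      have hC := hcore_lt d hd
      have hC' := hcore_lt d' hd'
      simp only [hg] at heq
      have hxy : toN (d j) = toN (d' j) ∧
          (∑ k, toN (d k) * B ^ (k : ℕ)) = ∑ k, toN (d' k) * B ^ (k : ℕ) := by
        rcases Nat.lt_trichotomy (toN (d j)) (toN (d' j)) with h | h | h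
        · exfalso
          have h2 : B ^ N * (toN (d j) + 1) ≤ B ^ N * toN (d' j) := Nat.mul_le_mul_left _ h
          rw [Nat.mul_add, Nat.mul_one] at h2
          exact nat_arith _ _ _ _ _ hC heq h2
        · refine ⟨h, ?_⟩
          rw [h] at heq
          exact Nat.add_right_cancel heq
        · exfalso
          have h2 : B ^ N * (toN (d' j) + 1) ≤ B ^ N * toN (d j) := Nat.mul_le_mul_left _ h
          rw [Nat.mul_add, Nat.mul_one] at h2
          exact nat_arith _ _ _ _ _ hC' heq.symm h2
      have hcore := hxy.2
      have hfun : (fun k => toN (d k)) = (fun k => toN (d' k)) :=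
        digits_inj N B _ _ (hbound d hd) (hbound d' hd') hcore
      funext k
      rw [← hcast d hd k, ← hcast d' hd' k, congrFun hfun k]
    -- the real weight vectors
    set wn : Fin N → Fin N → ℕ :=
      fun j k => B ^ (k : ℕ) + if k = j then B ^ N else 0 with hwn
    set w : Fin N → Fin N → ℝ := fun j k => ((wn j k : ℕ) : ℝ) with hw
    have hBpos : 0 < B := by rw [hB]; exact Nat.succ_pos _
    have hwpos : ∀ j k, 0 < w j k := by
      intro j k
      have h1 : 0 < B ^ (k : ℕ) := Nat.pow_pos hBpos
      have h2 : 0 < wn j k := lt_of_lt_of_le h1 (Nat.le_add_right _ _)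
      simp only [hw]
      exact_mod_cast h2
    have hfg : ∀ j, ∀ d ∈ Sched, (∑ k, w j k * d k) = ((g j d : ℕ) : ℝ) := by
      intro j d hd
      have step1 : (∑ k, w j k * d k)
          = ((∑ k : Fin N, wn j k * toN (d k) : ℕ) : ℝ) := by
        rw [Nat.cast_sum]
        refine Finset.sum_congr rfl fun k _ => ?_
        have hdk : ((toN (d k) : ℕ) : ℝ) = d k := hcast d hd k
        rw [Nat.cast_mul, hdk]
      rw [step1]
      congr 1
      simp only [hwn, hg, add_mul, Finset.sum_add_distrib, ite_mul, zero_mul,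
        Finset.sum_ite_eq', Finset.mem_univ, if_true]
      congr 1
      exact Finset.sum_congr rfl fun k _ => Nat.mul_comm _ _
    -- argmax construction
    have hzex : ∀ j : Fin N, ∃ z ∈ Sched,
        (∀ y ∈ Sched, y ≠ z → (∑ i, w j i * y i) < ∑ i, w j i * z i) ∧
        (∀ d ∈ Sched, toN (d j) ≤ toN (z j)) := by
      intro j
      obtain ⟨z, hzs, hzmax⟩ := s.exists_max_image (g j) (hfin.toFinset_nonempty.mpr hne)
      have hzS : z ∈ Sched := (hmem z).mp hzs
      refine ⟨z, hzS, ?_, ?_⟩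
      · intro y hy hyz
        have h1 : g j y ≤ g j z := hzmax y ((hmem y).mpr hy)
        have h2 : g j y ≠ g j z := fun h => hyz (hginj j y hy z hzS h)
        rw [hfg j y hy, hfg j z hzS]
        exact_mod_cast lt_of_le_of_ne h1 h2
      · intro d hd
        by_contra hcon
        push_neg at hcon
        have h1 : g j d ≤ g j z := hzmax d ((hmem d).mpr hd)
        have h2 : B ^ N * (toN (z j) + 1) ≤ B ^ N * toN (d j) := Nat.mul_le_mul_left _ hcon
        rw [Nat.mul_add, Nat.mul_one] at h2
        have h3 := hcore_lt z hzS
        simp only [hg] at h1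
        exact nat_arith2 _ _ _ _ _ h3 h1 h2
    -- first vertex, arbitrary priority
    obtain ⟨z₁, hz₁S, hz₁max, _⟩ := hzex ⟨0, hN⟩
    obtain ⟨hz₁ext, hz₁cmax⟩ :=
      unique_max_extreme N Sched (w ⟨0, hN⟩) (hwpos _) z₁ hz₁S hz₁max
    have hz₁Smax : ∀ y ∈ Sched, z₁ ≤ y → z₁ = y :=
      fun y hy h => hz₁cmax y (subset_convexHull ℝ Sched hy) h
    -- a maximal element of Sched different from z₁
    obtain ⟨d, hd, hdmax, hdz⟩ : ∃ d ∈ Sched, (∀ y ∈ Sched, d ≤ y → d = y) ∧ d ≠ z₁ := by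
      by_cases h : d₁ = z₁
      · exact ⟨d₂, hd₂, hmax2, by rw [← h]; exact hne12.symm⟩
      · exact ⟨d₁, hd₁, hmax1, h⟩
    have hnotle : ¬ d ≤ z₁ := fun h => hdz (hdmax z₁ hz₁S h)
    obtain ⟨j, hj⟩ : ∃ j, ¬ d j ≤ z₁ j := by
      by_contra hc
      push_neg at hc
      exact hnotle fun i => hc i
    have hjlt : z₁ j < d j := not_le.mp hj
    have hjN : toN (z₁ j) < toN (d j) := by
      have := hjlt
      rw [← hcast z₁ hz₁S j, ← hcast d hd j] at this
      exact_mod_cast this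
    -- second vertex, priority j
    obtain ⟨z₂, hz₂S, hz₂max, hz₂coord⟩ := hzex j
    obtain ⟨hz₂ext, hz₂cmax⟩ :=
      unique_max_extreme N Sched (w j) (hwpos _) z₂ hz₂S hz₂max
    have hz12 : z₁ ≠ z₂ := by
      intro h
      have h1 : toN (d j) ≤ toN (z₂ j) := hz₂coord d hd
      rw [← h] at h1
      exact absurd hjN (Nat.not_lt.mpr h1)
    exact ⟨z₁, hz₁ext, z₂, hz₂ext, hz12, hz₁cmax, hz₂cmax⟩
  · rintro ⟨e₁, he₁, e₂, he₂, hne', hm1, hm2⟩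
    refine ⟨e₁, extremePoints_convexHull_subset he₁, e₂, extremePoints_convexHull_subset he₂,
      hne', fun y hy h => hm1 y (subset_convexHull ℝ Sched hy) h,
      fun y hy h => hm2 y (subset_convexHull ℝ Sched hy) h⟩
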